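/- Let δ be an algebraic integer of degree 2 over ℚ, and let a, b be integers, p a prime with p ∣ b and p ∤ a. Write t = v_p(b). Let k be a positive integer with ℓ = v_p(k), and write (a + bδ)^k = a_k + b_k δ with a_k, b_k ∈ ℤ. Assume that p is odd, or that p = 2 and t ≥ 2, or that ℓ = 0. Then a_k ≡ a^k (mod p^{ℓ+t+1}) and b_k ≡ k·a^{k-1}·b (mod p^{ℓ+t+1}). -/

import Mathlib

/-- Coordinates of `δ^j` in the basis `{1, δ}`. -/
def stmt8_pq (u v : ℤ) : ℕ → ℤ × ℤ
  | 0 => (1, 0)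
  | j + 1 => ((stmt8_pq u v j).2 * u, (stmt8_pq u v j).1 + (stmt8_pq u v j).2 * v)

lemma stmt8_delta_pow {R : Type*} [CommRing R] (δ : R) (u v : ℤ)
    (h2 : δ ^ 2 = (u : R) + (v : R) * δ) :
    ∀ j : ℕ, δ ^ j = ((stmt8_pq u v j).1 : R) + ((stmt8_pq u v j).2 : R) * δ := by
  intro j
  induction j with
  | zero => simp [stmt8_pq]
  | succ j ih =>
      have : δ ^ (j + 1) = δ ^ j * δ := by ring
      rw [this, ih]
      have hδ2 : δ * δ = (u : R) + (v : R) * δ := by rw [← h2]; ring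
      simp only [stmt8_pq]
      push_cast
      calc (((stmt8_pq u v j).1 : R) + ((stmt8_pq u v j).2 : R) * δ) * δ
          = ((stmt8_pq u v j).1 : R) * δ + ((stmt8_pq u v j).2 : R) * (δ * δ) := by ring
        _ = _ := by rw [hδ2]; ring

lemma stmt8_two_mul_lt_pow (s : ℕ) : 2 * s + 1 ≤ 3 ^ s := by
  induction s with
  | zero => norm_num
  | succ s ih =>
      have : 3 ^ (s + 1) = 3 * 3 ^ s := by ring
      omega

/-- Key divisibility fact for binomial coefficients. -/
lemma stmt8_key (p t ℓ k j : ℕ) (hp : p.Prime) (b : ℤ) (hptb : (p : ℤ) ^ t ∣ b)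
    (ht1 : 1 ≤ t) (hℓk : p ^ ℓ ∣ k) (hj2 : 2 ≤ j) (hjk : j ≤ k)
    (hcase : Odd p ∨ (p = 2 ∧ 2 ≤ t) ∨ ℓ = 0) :
    (p : ℤ) ^ (ℓ + t + 1) ∣ (k.choose j : ℤ) * b ^ j := by
  haveI : Fact p.Prime := ⟨hp⟩
  set s := padicValNat p j with hs
  have hk1 : 1 ≤ k := by omega
  have hj0 : 0 < j := by omega
  have hchoose_pos : 0 < k.choose j := Nat.choose_pos hjk
  -- p^(ℓ - s) divides choose k j
  have hdvd_choose : p ^ (ℓ - s) ∣ k.choose j := by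
    have hident : k * (k - 1).choose (j - 1) = k.choose j * j := by
      have := Nat.add_one_mul_choose_eq (k - 1) (j - 1)
      have h1 : k - 1 + 1 = k := by omega
      have h2 : j - 1 + 1 = j := by omega
      simpa [Nat.succ_eq_add_one, h1, h2] using this
    have hdvd : p ^ ℓ ∣ k.choose j * j := by
      rw [← hident]; exact hℓk.mul_right _
    have hle : ℓ ≤ padicValNat p (k.choose j * j) :=
      (padicValNat_dvd_iff_le (p := p) (by positivity)).mp hdvd
    rw [padicValNat.mul (by omega) (by omega)] at hle
    calc p ^ (ℓ - s) ∣ p ^ padicValNat p (k.choose j) :=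
          pow_dvd_pow p (by omega)
      _ ∣ k.choose j := pow_padicValNat_dvd
  -- the inequality j * t ≥ t + 1 + min s ℓ
  have hps : p ^ s ≤ j := Nat.le_of_dvd hj0 pow_padicValNat_dvd
  have hineq : t + 1 + min s ℓ ≤ j * t := by
    obtain ⟨i, rfl⟩ : ∃ i, j = i + 2 := ⟨j - 2, by omega⟩
    have hmul : (i + 2) * t = i * t + 2 * t := by ring
    have hit : i ≤ i * t := Nat.le_mul_of_pos_right i (by omega)
    rcases hcase with hodd | ⟨hp2, ht2⟩ | hl0
    · -- p odd, so p ≥ 3 and 2s + 1 ≤ 3^s ≤ p^s ≤ j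
      have hp3 : 3 ≤ p := by
        have h2le := hp.two_le
        have hne : p ≠ 2 := by rintro rfl; exact (by decide : ¬ Odd 2) hodd
        omega
      have h3s : 3 ^ s ≤ p ^ s := Nat.pow_le_pow_left hp3 s
      have h2s : 2 * s + 1 ≤ 3 ^ s := stmt8_two_mul_lt_pow s
      have hsle : 2 * s + 1 ≤ i + 2 := by omega
      have hmin : min s ℓ ≤ s := min_le_left _ _
      omega
    · -- p = 2, t ≥ 2 : s + 1 ≤ 2^s ≤ j
      subst hp2
      have h2s : s + 1 ≤ 2 ^ s := Nat.lt_two_pow_self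
      have hsle : s + 1 ≤ i + 2 := by omega
      have hit2 : i * 2 ≤ i * t := Nat.mul_le_mul_left i ht2
      have hmin : min s ℓ ≤ s := min_le_left _ _
      omega
    · -- ℓ = 0
      have hmin : min s ℓ ≤ ℓ := min_le_right _ _
      omega
  -- assemble
  have hbj : (p : ℤ) ^ (t * j) ∣ b ^ j := by
    rw [pow_mul]
    exact pow_dvd_pow_of_dvd hptb j
  have hcz : (p : ℤ) ^ (ℓ - s) ∣ (k.choose j : ℤ) := by
    exact_mod_cast Int.natCast_dvd_natCast.mpr hdvd_choose
  have hmain : (p : ℤ) ^ (ℓ - s + t * j) ∣ (k.choose j : ℤ) * b ^ j := by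
    rw [pow_add]
    exact mul_dvd_mul hcz hbj
  refine dvd_trans (pow_dvd_pow _ ?_) hmain
  have hcomm : t * j = j * t := Nat.mul_comm t j
  rcases le_total s ℓ with h | h
  · have hm : min s ℓ = s := min_eq_left h
    omega
  · have hm : min s ℓ = ℓ := min_eq_right h
    omega

theorem stmt_8 {R : Type*} [CommRing R] (δ : R) (u v : ℤ)
    (h2 : δ ^ 2 = (u : R) + (v : R) * δ)
    (hindep : ∀ m n m_ n_ : ℤ, (m : R) + (n : R) * δ = (m_ : R) + (n_ : R) * δ → m = m_ ∧ n = n_)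
    (a b : ℤ) (p : ℕ) (hp : p.Prime) (hpb : (p : ℤ) ∣ b) (hpa : ¬ (p : ℤ) ∣ a) (hb : b ≠ 0)
    (t : ℕ) (ht : t = padicValInt p b)
    (k : ℕ) (hk : 0 < k) (ℓ : ℕ) (hℓ : ℓ = padicValNat p k)
    (a_k b_k : ℤ) (hpow : ((a : R) + (b : R) * δ) ^ k = (a_k : R) + (b_k : R) * δ)
    (hcase : Odd p ∨ (p = 2 ∧ 2 ≤ t) ∨ ℓ = 0) :
    (p : ℤ) ^ (ℓ + t + 1) ∣ a_k - a ^ k ∧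
      (p : ℤ) ^ (ℓ + t + 1) ∣ b_k - (k : ℤ) * a ^ (k - 1) * b := by
  haveI : Fact p.Prime := ⟨hp⟩
  -- basic valuation facts
  have hptb : (p : ℤ) ^ t ∣ b := by rw [ht]; exact padicValInt_dvd b
  have ht1 : 1 ≤ t := by
    rw [ht, padicValInt]
    have hnd : p ∣ b.natAbs := by
      have := Int.natAbs_dvd_natAbs.mpr hpb
      simpa using this
    exact one_le_padicValNat_of_dvd (Int.natAbs_ne_zero.mpr hb) hnd
  have hℓk : p ^ ℓ ∣ k := by rw [hℓ]; exact pow_padicValNat_dvd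
  -- coefficients
  set P : ℕ → ℤ := fun j => (stmt8_pq u v j).1 with hP
  set Q : ℕ → ℤ := fun j => (stmt8_pq u v j).2 with hQ
  set c : ℕ → ℤ := fun j => a ^ j * b ^ (k - j) * (k.choose j : ℤ) with hc
  -- binomial expansion
  have expand : ((a : R) + (b : R) * δ) ^ k =
      ((∑ j ∈ Finset.range (k + 1), c j * P (k - j) : ℤ) : R) +
      ((∑ j ∈ Finset.range (k + 1), c j * Q (k - j) : ℤ) : R) * δ := by
    rw [add_pow]
    push_cast
    rw [Finset.sum_mul, ← Finset.sum_add_distrib]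
    apply Finset.sum_congr rfl
    intro j hj
    rw [mul_pow, stmt8_delta_pow δ u v h2 (k - j)]
    simp only [hc]
    push_cast
    ring
  rw [expand] at hpow
  obtain ⟨hA, hB⟩ := hindep _ _ _ _ hpow
  -- peel off the top two terms
  obtain ⟨k', rfl⟩ : ∃ k', k = k' + 1 := ⟨k - 1, by omega⟩
  have hPQ0 : P 0 = 1 ∧ Q 0 = 0 ∧ P 1 = 0 ∧ Q 1 = 1 := by
    simp [hP, hQ, stmt8_pq]
  have hsumA : ∑ j ∈ Finset.range (k' + 1 + 1), c j * P (k' + 1 - j) =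
      (∑ j ∈ Finset.range k', c j * P (k' + 1 - j)) + a ^ (k' + 1) := by
    rw [Finset.sum_range_succ, Finset.sum_range_succ]
    have h1 : k' + 1 - (k' + 1) = 0 := by omega
    have h2 : k' + 1 - k' = 1 := by omega
    rw [h1, h2, hPQ0.1, hPQ0.2.2.1]
    simp [hc]
  have hsumB : ∑ j ∈ Finset.range (k' + 1 + 1), c j * Q (k' + 1 - j) =
      (∑ j ∈ Finset.range k', c j * Q (k' + 1 - j)) +
        ((k' + 1 : ℕ) : ℤ) * a ^ k' * b := by
    rw [Finset.sum_range_succ, Finset.sum_range_succ]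
    have h1 : k' + 1 - (k' + 1) = 0 := by omega
    have h2 : k' + 1 - k' = 1 := by omega
    rw [h1, h2, hPQ0.2.1, hPQ0.2.2.2]
    have h3 : (k' + 1).choose k' = k' + 1 := Nat.choose_succ_self_right k'
    simp [hc, h3]
    ring
  -- divisibility of each remaining term
  have hterm : ∀ j ∈ Finset.range k', (p : ℤ) ^ (ℓ + t + 1) ∣ c j * P (k' + 1 - j) ∧
      (p : ℤ) ^ (ℓ + t + 1) ∣ c j * Q (k' + 1 - j) := by
    intro j hj
    rw [Finset.mem_range] at hj
    have hkey : (p : ℤ) ^ (ℓ + t + 1) ∣ ((k' + 1).choose (k' + 1 - j) : ℤ) * b ^ (k' + 1 - j) :=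
      stmt8_key p t ℓ (k' + 1) (k' + 1 - j) hp b hptb ht1 hℓk (by omega) (by omega) hcase
    have hsymm : (k' + 1).choose (k' + 1 - j) = (k' + 1).choose j :=
      Nat.choose_symm (by omega)
    rw [hsymm] at hkey
    constructor
    · have : c j * P (k' + 1 - j) =
          (((k' + 1).choose j : ℤ) * b ^ (k' + 1 - j)) * (a ^ j * P (k' + 1 - j)) := by
        simp only [hc]; ring
      rw [this]
      exact hkey.mul_right _
    · have : c j * Q (k' + 1 - j) =
          (((k' + 1).choose j : ℤ) * b ^ (k' + 1 - j)) * (a ^ j * Q (k' + 1 - j)) := by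
        simp only [hc]; ring
      rw [this]
      exact hkey.mul_right _
  constructor
  · have : a_k - a ^ (k' + 1) = ∑ j ∈ Finset.range k', c j * P (k' + 1 - j) := by
      rw [← hA, hsumA]; ring
    rw [this]
    exact Finset.dvd_sum fun j hj => (hterm j hj).1
  · have : b_k - ((k' + 1 : ℕ) : ℤ) * a ^ (k' + 1 - 1) * b =
        ∑ j ∈ Finset.range k', c j * Q (k' + 1 - j) := by
      rw [← hB, hsumB]
      simp only [Nat.add_sub_cancel]
      ring
    rw [this]
    exact Finset.dvd_sum fun j hj => (hterm j hj).2
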